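/- (Lemma 3(i).) Let Φ₁, Φ₂ be unit vectors in ℂᵈ, let ε ∈ [0, 1/2], and suppose there is a two-outcome POVM (Π₁, Π₂) with ⟨Φ₁, Π₁Φ₁⟩ ≥ 1 − ε and ⟨Φ₂, Π₂Φ₂⟩ ≥ 1 − ε. Then 2·√(1 − |⟨Φ₁, Φ₂⟩|²) ≥ 2·√(1 − 4ε(1 − ε)); that is, the trace distance between the pure states Φ₁ and Φ₂ is at least 2·√(1 − 4ε(1 − ε)). -/

import Mathlib

open Matrix ComplexOrder

open scoped MatrixOrder in
lemma povm_cs {d : ℕ} (P : Matrix (Fin d) (Fin d) ℂ) (hP : P.PosSemidef)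
    (x y : Fin d → ℂ) :
    ‖star x ⬝ᵥ (P *ᵥ y)‖ ≤
      Real.sqrt (star x ⬝ᵥ (P *ᵥ x)).re * Real.sqrt (star y ⬝ᵥ (P *ᵥ y)).re := by
  set S := CFC.sqrt P with hS
  have hSH : Sᴴ = S := (CFC.sqrt_nonneg P).posSemidef.1
  have key : ∀ u v : Fin d → ℂ, star u ⬝ᵥ (P *ᵥ v) = star (S *ᵥ u) ⬝ᵥ (S *ᵥ v) := by
    intro u v
    rw [← CFC.sqrt_mul_sqrt_self P hP.nonneg, ← mulVec_mulVec, star_mulVec, hSH, dotProduct_mulVec]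
  rw [key, key, key]
  set a : EuclideanSpace ℂ (Fin d) := (WithLp.equiv 2 _).symm (S *ᵥ x)
  set b : EuclideanSpace ℂ (Fin d) := (WithLp.equiv 2 _).symm (S *ᵥ y)
  have h1 : star (S *ᵥ x) ⬝ᵥ (S *ᵥ y) = inner ℂ a b := by
    simp [a, b, PiLp.inner_apply, dotProduct, mul_comm]
  have h2 : star (S *ᵥ x) ⬝ᵥ (S *ᵥ x) = inner ℂ a a := by
    simp [a, PiLp.inner_apply, dotProduct, mul_comm, -inner_self_eq_norm_sq_to_K]
  have h3 : star (S *ᵥ y) ⬝ᵥ (S *ᵥ y) = inner ℂ b b := by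
    simp [b, PiLp.inner_apply, dotProduct, mul_comm, -inner_self_eq_norm_sq_to_K]
  rw [h1, h2, h3]
  have hre : ∀ z : EuclideanSpace ℂ (Fin d), (inner (𝕜 := ℂ) z z).re = ‖z‖ ^ 2 := by
    intro z
    rw [← inner_self_eq_norm_sq (𝕜 := ℂ)]; rfl
  rw [hre, hre, Real.sqrt_sq (norm_nonneg _), Real.sqrt_sq (norm_nonneg _)]
  exact norm_inner_le_norm a b

lemma povm_real_aux (ε a b : ℝ) (hε0 : 0 ≤ ε) (hε2 : ε ≤ 1/2)
    (ha1 : 1 - ε ≤ a) (ha2 : a ≤ 1) (hb0 : 0 ≤ b) (hb : b ≤ ε) :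
    Real.sqrt a * Real.sqrt b + Real.sqrt (1 - a) * Real.sqrt (1 - b) ≤
      Real.sqrt (4 * ε * (1 - ε)) := by
  have ha0 : 0 ≤ a := by linarith
  have ha1' : 0 ≤ 1 - a := by linarith
  have hb1 : 0 ≤ 1 - b := by linarith
  have hprod : Real.sqrt a * Real.sqrt b * (Real.sqrt (1 - a) * Real.sqrt (1 - b))
      ≤ ε * (1 - ε) := by
    rw [← Real.sqrt_mul ha0, ← Real.sqrt_mul ha1', ← Real.sqrt_mul (by positivity)]
    calc Real.sqrt (a * b * ((1 - a) * (1 - b)))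
        ≤ Real.sqrt ((ε * (1 - ε)) ^ 2) := by
          apply Real.sqrt_le_sqrt
          nlinarith [mul_nonneg ha0 ha1', mul_nonneg hb0 hb1,
            mul_le_mul (show a * (1 - a) ≤ ε * (1 - ε) by nlinarith)
              (show b * (1 - b) ≤ ε * (1 - ε) by nlinarith)
              (mul_nonneg hb0 hb1) (by nlinarith)]
      _ = ε * (1 - ε) := Real.sqrt_sq (by nlinarith)
  rw [show (4 : ℝ) * ε * (1 - ε) = (2 * Real.sqrt (ε * (1-ε)))^2 by
    rw [mul_pow, Real.sq_sqrt (by nlinarith)]; ring]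
  rw [Real.sqrt_sq (by positivity)]
  nlinarith [Real.sq_sqrt ha0, Real.sq_sqrt hb0, Real.sq_sqrt ha1', Real.sq_sqrt hb1,
    Real.sq_sqrt (show (0:ℝ) ≤ ε * (1-ε) by nlinarith), Real.sqrt_nonneg (ε * (1-ε)),
    sq_nonneg (Real.sqrt a * Real.sqrt b + Real.sqrt (1-a) * Real.sqrt (1-b) - 2 * Real.sqrt (ε * (1-ε))),
    mul_nonneg (Real.sqrt_nonneg a) (Real.sqrt_nonneg b),
    mul_nonneg (Real.sqrt_nonneg (1-a)) (Real.sqrt_nonneg (1-b))]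

/-- Lemma 3(i): if two states can be discriminated with bounded error `ε` by a
two-outcome POVM, then their trace distance is at least `2√(1 - 4ε(1-ε))`. -/
theorem traceDist_ge_of_bounded_error_povm (d : ℕ) (Φ₁ Φ₂ : Fin d → ℂ)
    (hΦ₁ : star Φ₁ ⬝ᵥ Φ₁ = 1) (hΦ₂ : star Φ₂ ⬝ᵥ Φ₂ = 1)
    (ε : ℝ) (hε : ε ∈ Set.Icc (0 : ℝ) (1/2))
    (P₁ P₂ : Matrix (Fin d) (Fin d) ℂ)
    (hP₁ : P₁.PosSemidef) (hP₂ : P₂.PosSemidef) (hsum : P₁ + P₂ = 1)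
    (hm₁ : ((1 - ε : ℝ) : ℂ) ≤ star Φ₁ ⬝ᵥ (P₁ *ᵥ Φ₁))
    (hm₂ : ((1 - ε : ℝ) : ℂ) ≤ star Φ₂ ⬝ᵥ (P₂ *ᵥ Φ₂)) :
    2 * Real.sqrt (1 - 4 * ε * (1 - ε)) ≤
      2 * Real.sqrt (1 - ‖star Φ₁ ⬝ᵥ Φ₂‖ ^ 2) := by
  obtain ⟨hε0, hε2⟩ := hε
  set a : ℝ := (star Φ₁ ⬝ᵥ (P₁ *ᵥ Φ₁)).re with ha
  set b : ℝ := (star Φ₂ ⬝ᵥ (P₁ *ᵥ Φ₂)).re with hb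
  -- splitting identities: ⟨x, P₁ x⟩ + ⟨x, P₂ x⟩ = ⟨x,x⟩
  have hsplit : ∀ x y : Fin d → ℂ,
      star x ⬝ᵥ (P₁ *ᵥ y) + star x ⬝ᵥ (P₂ *ᵥ y) = star x ⬝ᵥ y := by
    intro x y
    rw [← dotProduct_add, ← add_mulVec, hsum, one_mulVec]
  have hsplit1 := hsplit Φ₁ Φ₁
  have hsplit2 := hsplit Φ₂ Φ₂
  rw [hΦ₁] at hsplit1
  rw [hΦ₂] at hsplit2
  have ha1 : 1 - ε ≤ a := (Complex.le_def.mp hm₁).1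
  have hP2Φ₁ : 0 ≤ (star Φ₁ ⬝ᵥ (P₂ *ᵥ Φ₁)).re := (Complex.nonneg_iff.mp (hP₂.dotProduct_mulVec_nonneg Φ₁)).1
  have hP1Φ₂ : 0 ≤ b := (Complex.nonneg_iff.mp (hP₁.dotProduct_mulVec_nonneg Φ₂)).1
  have ha2 : a ≤ 1 := by
    have := congrArg Complex.re hsplit1
    simp only [Complex.add_re, Complex.one_re] at this
    linarith
  have hbε : b ≤ ε := by
    have := congrArg Complex.re hsplit2
    simp only [Complex.add_re, Complex.one_re] at this
    have h2 : 1 - ε ≤ (star Φ₂ ⬝ᵥ (P₂ *ᵥ Φ₂)).re := (Complex.le_def.mp hm₂).1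
    linarith
  -- the "complement" re values
  have hcompl1 : (star Φ₁ ⬝ᵥ (P₂ *ᵥ Φ₁)).re = 1 - a := by
    have := congrArg Complex.re hsplit1
    simp only [Complex.add_re, Complex.one_re] at this
    linarith
  have hcompl2 : (star Φ₂ ⬝ᵥ (P₂ *ᵥ Φ₂)).re = 1 - b := by
    have := congrArg Complex.re hsplit2
    simp only [Complex.add_re, Complex.one_re] at this
    linarith
  -- triangle + Cauchy–Schwarz
  have htri : ‖star Φ₁ ⬝ᵥ Φ₂‖ ≤
      Real.sqrt a * Real.sqrt b + Real.sqrt (1 - a) * Real.sqrt (1 - b) := by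
    have hsp := hsplit Φ₁ Φ₂
    calc ‖star Φ₁ ⬝ᵥ Φ₂‖
        = ‖star Φ₁ ⬝ᵥ (P₁ *ᵥ Φ₂) + star Φ₁ ⬝ᵥ (P₂ *ᵥ Φ₂)‖ := by rw [hsp]
      _ ≤ ‖star Φ₁ ⬝ᵥ (P₁ *ᵥ Φ₂)‖ + ‖star Φ₁ ⬝ᵥ (P₂ *ᵥ Φ₂)‖ :=
          norm_add_le _ _
      _ ≤ Real.sqrt a * Real.sqrt b + Real.sqrt (1 - a) * Real.sqrt (1 - b) := by
          have c1 := povm_cs P₁ hP₁ Φ₁ Φ₂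
          have c2 := povm_cs P₂ hP₂ Φ₁ Φ₂
          rw [hcompl1, hcompl2] at c2
          exact add_le_add c1 c2
  have hkey : ‖star Φ₁ ⬝ᵥ Φ₂‖ ≤ Real.sqrt (4 * ε * (1 - ε)) :=
    htri.trans (povm_real_aux ε a b hε0 hε2 ha1 ha2 hP1Φ₂ hbε)
  have habs : ‖star Φ₁ ⬝ᵥ Φ₂‖ ^ 2 ≤ 4 * ε * (1 - ε) := by
    have := sq_le_sq' (by nlinarith [norm_nonneg (star Φ₁ ⬝ᵥ Φ₂), Real.sqrt_nonneg (4 * ε * (1-ε))]) hkey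
    rwa [Real.sq_sqrt (by nlinarith)] at this
  gcongr
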